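/- For all integers d ≥ 1 and 0 ≤ k ≤ n, the product {k:d}!·{n-k:d}! divides {n:d}! in Z[s,t], and the quotient, i.e. the d-divisible Lucasnomial {n:d choose k:d}_L, is a polynomial in s and t all of whose coefficients are nonnegative integers. -/
import Mathlib


open MvPolynomial Finset

noncomputable section

/-- Polynomial ring ℤ[s,t] with s = X 0, t = X 1. -/
abbrev P2 : Type := MvPolynomial (Fin 2) ℤ

def ps : P2 := X 0
def pt : P2 := X 1

/-- The Lucas sequence of polynomials: {0}=0, {1}=1, {n}=s{n-1}+t{n-2}. -/
def lucas : ℕ → P2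
  | 0 => 0
  | 1 => 1
  | (n+2) => ps * lucas (n+1) + pt * lucas n

/-- The Lucastorial {n}! = {1}{2}⋯{n}. -/
def lucasFact (n : ℕ) : P2 := ∏ i ∈ Finset.range n, lucas (i+1)

/-- The d-divisible Lucastorial {n:d}! = {d}{2d}⋯{nd}. -/
def lucasFactD (d n : ℕ) : P2 := ∏ i ∈ Finset.range n, lucas (d*(i+1))

/-- A polynomial lies in ℕ[s,t]: all coefficients are nonnegative. -/
def Nonneg (p : P2) : Prop := ∀ m, 0 ≤ p.coeff m

/-- The fraction field ℤ(s,t). -/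
abbrev K : Type := FractionRing P2

def φ : P2 →+* K := algebraMap P2 K

def L (n : ℕ) : K := φ (lucas n)

def LFact (n : ℕ) : K := φ (lucasFact n)

def LFactD (d n : ℕ) : K := φ (lucasFactD d n)

/-- The Lucasnomial {n choose k}, as an element of the fraction field. -/
def lnom (n k : ℕ) : K := LFact n / (LFact k * LFact (n-k))

/-- The d-divisible Lucasnomial {n:d choose k:d}, as an element of the fraction field. -/
def lnomD (d n k : ℕ) : K := LFactD d n / (LFactD d k * LFactD d (n-k))

/-- The Lucas-Catalan number C_{n} = (1/{n+1}) {2n choose n}. -/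
def catL (n : ℕ) : K := lnom (2*n) n / L (n+1)

/-- The Lucas-Fuss-Catalan number C_{n,k} = (1/{kn+1}) {(k+1)n choose n}. -/
def fussCatL (n k : ℕ) : K := lnom ((k+1)*n) n / L (k*n+1)

lemma lucas_succ_succ (n : ℕ) : lucas (n+2) = ps * lucas (n+1) + pt * lucas n := rfl

lemma lucas_zero' : lucas 0 = 0 := rfl
lemma lucas_one' : lucas 1 = 1 := rfl

lemma nonneg_one : Nonneg (1 : P2) := by
  intro m; rw [MvPolynomial.coeff_one]; split <;> norm_num

lemma nonneg_add {p q : P2} (hp : Nonneg p) (hq : Nonneg q) : Nonneg (p + q) := by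
  intro m; rw [MvPolynomial.coeff_add]; exact add_nonneg (hp m) (hq m)

lemma nonneg_mul {p q : P2} (hp : Nonneg p) (hq : Nonneg q) : Nonneg (p * q) := by
  intro m; rw [MvPolynomial.coeff_mul]
  exact Finset.sum_nonneg fun x _ => mul_nonneg (hp _) (hq _)

lemma nonneg_X (i : Fin 2) : Nonneg (X i : P2) := by
  intro m; rw [MvPolynomial.coeff_X']; split <;> norm_num

lemma nonneg_zero : Nonneg (0 : P2) := by intro m; simp

lemma ps_nonneg : Nonneg ps := nonneg_X 0
lemma pt_nonneg : Nonneg pt := nonneg_X 1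

lemma lucas_nonneg : ∀ n, Nonneg (lucas n)
  | 0 => by rw [lucas_zero']; exact nonneg_zero
  | 1 => by rw [lucas_one']; exact nonneg_one
  | (n+2) => by
      rw [lucas_succ_succ]
      exact nonneg_add (nonneg_mul ps_nonneg (lucas_nonneg (n+1)))
        (nonneg_mul pt_nonneg (lucas_nonneg n))

lemma lucas_two' : lucas 2 = ps := by
  have : (2 : ℕ) = 0 + 2 := rfl
  rw [this, lucas_succ_succ, lucas_one', lucas_zero']; ring

/-- Addition formula: {a+b+1} = {a+1}{b+1} + t{a}{b}. -/
lemma lucas_add : ∀ a b : ℕ, lucas (a + b + 1) =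
    lucas (a+1) * lucas (b+1) + pt * lucas a * lucas b
  | 0, b => by simp [lucas_zero', lucas_one']
  | 1, b => by
      rw [show 1 + b + 1 = b + 2 from by omega, lucas_succ_succ, lucas_two', lucas_one']
      ring
  | (a+2), b => by
      have h1 := lucas_add (a+1) b
      have h2 := lucas_add a b
      rw [show a + 2 + b + 1 = (a + b + 1) + 2 from by omega, lucas_succ_succ,
        show a + b + 1 + 1 = (a+1) + b + 1 from by omega, h1, h2,
        show a + 2 + 1 = (a+1) + 2 from by omega]
      simp only [lucas_succ_succ]
      ring

lemma lucasFactD_succ (d r : ℕ) :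
    lucasFactD d (r+1) = lucas (d*(r+1)) * lucasFactD d r := by
  rw [lucasFactD, Finset.prod_range_succ, lucasFactD]; ring

/-- {k:d}!{n-k:d}! divides {n:d}! with quotient (the d-divisible
Lucasnomial) in ℕ[s,t]. -/
theorem dLucasnomial_nonneg (d n k : ℕ) (hd : 1 ≤ d) (hk : k ≤ n) :
    ∃ p : P2, Nonneg p ∧ lucasFactD d n = p * (lucasFactD d k * lucasFactD d (n-k)) := by
  induction n generalizing k with
  | zero =>
      interval_cases k
      exact ⟨1, nonneg_one, by simp [lucasFactD]⟩
  | succ n ih =>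
      rcases Nat.eq_zero_or_pos k with h0 | hpos
      · subst h0
        exact ⟨1, nonneg_one, by simp [lucasFactD]⟩
      rcases eq_or_lt_of_le hk with heq | hlt
      · subst heq
        exact ⟨1, nonneg_one, by simp [lucasFactD]⟩
      · obtain ⟨j, rfl⟩ : ∃ j, k = j + 1 := ⟨k - 1, by omega⟩
        have hkn : j + 1 ≤ n := by omega
        obtain ⟨m, hm⟩ : ∃ m, n = j + 1 + m := ⟨n - (j+1), by omega⟩
        obtain ⟨e, rfl⟩ : ∃ e, d = e + 1 := ⟨d - 1, by omega⟩
        obtain ⟨p1, hp1n, hp1⟩ := ih (j+1) hkn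
        obtain ⟨p2, hp2n, hp2⟩ := ih j (by omega)
        rw [show n - (j+1) = m from by omega] at hp1
        rw [show n - j = m + 1 from by omega] at hp2
        rw [show n + 1 - (j+1) = m + 1 from by omega]
        refine ⟨lucas ((e+1)*(j+1)+1) * p1 + pt * lucas (e*(m+1)+m) * p2, ?_, ?_⟩
        · exact nonneg_add (nonneg_mul (lucas_nonneg _) hp1n)
            (nonneg_mul (nonneg_mul pt_nonneg (lucas_nonneg _)) hp2n)
        · have key := lucas_add ((e+1)*(j+1)) (e*(m+1)+m)
          rw [show e*(m+1)+m+1 = (e+1)*(m+1) from by ring] at key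
          have hidx : (e+1)*(n+1) = (e+1)*(j+1) + (e*(m+1)+m) + 1 := by
            subst hm; ring
          have h1 : lucas ((e+1)*(m+1)) * lucasFactD (e+1) m = lucasFactD (e+1) (m+1) :=
            (lucasFactD_succ (e+1) m).symm
          have h2 : lucas ((e+1)*(j+1)) * lucasFactD (e+1) j = lucasFactD (e+1) (j+1) :=
            (lucasFactD_succ (e+1) j).symm
          calc lucasFactD (e+1) (n+1)
              = lucas ((e+1)*(j+1)+1) * lucas ((e+1)*(m+1)) * lucasFactD (e+1) n
                + pt * lucas (e*(m+1)+m) * lucas ((e+1)*(j+1)) * lucasFactD (e+1) n := by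
                rw [lucasFactD_succ, hidx, key]; ring
            _ = lucas ((e+1)*(j+1)+1) * lucas ((e+1)*(m+1)) *
                  (p1 * (lucasFactD (e+1) (j+1) * lucasFactD (e+1) m))
                + pt * lucas (e*(m+1)+m) * lucas ((e+1)*(j+1)) *
                  (p2 * (lucasFactD (e+1) j * lucasFactD (e+1) (m+1))) := by
                rw [← hp1, ← hp2]
            _ = (lucas ((e+1)*(j+1)+1) * p1 + pt * lucas (e*(m+1)+m) * p2) *
                  (lucasFactD (e+1) (j+1) * lucasFactD (e+1) (m+1)) := by
                rw [← h1, ← h2]; ring
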